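/- Let T be a cluster-tilting object in C. Then C(T) = C, i.e. every object X of C admits a triangle T₁ → T₀ → X → ΣT₁ with T₀, T₁ ∈ add T. Consequently, the functor Hom_C(T, −) induces an equivalence C/add ΣT → mod End_C(T)^op, where C/add ΣT is the quotient of C by the ideal of maps factoring through an object of add ΣT. -/

import Mathlib

/-!
Common setup: `C` is a Hom-finite, Krull-Schmidt (= idempotent complete, given
Hom-finiteness over a field), `k`-linear triangulated category with suspension
functor `Σ = shiftFunctor C (1 : ℤ)`, and `T` is a rigid object of `C`.
-/

noncomputable section

open CategoryTheory CategoryTheory.Limits CategoryTheory.Pretriangulated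

universe v u

namespace PaperBM

variable {C : Type u} [Category.{v} C] [Preadditive C] [HasZeroObject C]
  [HasShift C ℤ] [∀ n : ℤ, (shiftFunctor C n).Additive] [Pretriangulated C]
  [HasFiniteBiproducts C]

/-- `X` lies in `add T`: it is a direct summand of a finite direct sum of copies of `T`. -/
def memAdd (T X : C) : Prop :=
  ∃ (n : ℕ) (s : X ⟶ ⨁ (fun _ : Fin n => T)) (r : (⨁ fun _ : Fin n => T) ⟶ X), s ≫ r = 𝟙 X

/-- `T` is rigid: `Hom_C(T, ΣT) = 0`. -/
def IsRigidObj (T : C) : Prop := ∀ f : T ⟶ (shiftFunctor C (1 : ℤ)).obj T, f = 0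

/-- `Y ∈ T^⊥`, i.e. `Hom_C(X, ΣY) = 0` for all `X ∈ add T`. -/
def memTperp (T Y : C) : Prop :=
  ∀ (X : C), memAdd T X → ∀ f : X ⟶ (shiftFunctor C (1 : ℤ)).obj Y, f = 0

/-- `Y ∈ ⊥T`, i.e. `Hom_C(Y, ΣX) = 0` for all `X ∈ add T`. -/
def memPerpT (T Y : C) : Prop :=
  ∀ (X : C), memAdd T X → ∀ f : Y ⟶ (shiftFunctor C (1 : ℤ)).obj X, f = 0

/-- `Y ∈ ΣT^⊥`, the image of `T^⊥` under the suspension `Σ`. -/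
def memSigmaTperp (T Y : C) : Prop :=
  ∃ Z : C, memTperp T Z ∧ Nonempty (Y ≅ (shiftFunctor C (1 : ℤ)).obj Z)

/-- The map `f` factors through an object belonging to the class `P` of objects. -/
def FactorsThru (P : C → Prop) {A B : C} (f : A ⟶ B) : Prop :=
  ∃ (Z : C) (g : A ⟶ Z) (h : Z ⟶ B), P Z ∧ g ≫ h = f

/-- The class `S̃` of maps `f : X ⟶ Y` such that in a completion
`Σ⁻¹Z →h X →f Y →g Z` of `f` to a triangle (where `A` plays the role of `Σ⁻¹Z`,
so that `Z = ΣA`), both `g` and `h` factor through an object of `ΣT^⊥`. -/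
def Stilde (T : C) : MorphismProperty C := fun X Y f =>
  ∃ (A : C) (h : A ⟶ X) (g : Y ⟶ (shiftFunctor C (1 : ℤ)).obj A),
    (Triangle.mk h f g ∈ distTriang C) ∧
    FactorsThru (memSigmaTperp T) g ∧ FactorsThru (memSigmaTperp T) h

/-- The class `S` of maps `f : X ⟶ Y` such that in a completion
`Σ⁻¹Z →h X →f Y →g Z` of `f` to a triangle (where `A` plays the role of `Σ⁻¹Z`,
so that `Z = ΣA`), `g` factors through an object of `ΣT^⊥` and `Σ⁻¹Z ∈ ΣT^⊥`. -/
def Sclass (T : C) : MorphismProperty C := fun X Y f =>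
  ∃ (A : C) (h : A ⟶ X) (g : Y ⟶ (shiftFunctor C (1 : ℤ)).obj A),
    (Triangle.mk h f g ∈ distTriang C) ∧
    FactorsThru (memSigmaTperp T) g ∧ memSigmaTperp T A

/-- `X ∈ C(T)`: there is a triangle `T₁ → T₀ → X → ΣT₁` with `T₀, T₁ ∈ add T`. -/
def memCT (T X : C) : Prop :=
  ∃ (T₁ T₀ : C) (a : T₁ ⟶ T₀) (b : T₀ ⟶ X) (c : X ⟶ (shiftFunctor C (1 : ℤ)).obj T₁),
    memAdd T T₁ ∧ memAdd T T₀ ∧ (Triangle.mk a b c ∈ distTriang C)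

/-- `f : X₀ ⟶ Y` is a right `P`-approximation of `Y`. -/
def IsRightApprox (P : C → Prop) {X₀ Y : C} (f : X₀ ⟶ Y) : Prop :=
  P X₀ ∧ ∀ (W : C), P W → ∀ g : W ⟶ Y, ∃ g' : W ⟶ X₀, g' ≫ f = g

/-- `f : Y ⟶ X₀` is a left `P`-approximation of `Y`. -/
def IsLeftApprox (P : C → Prop) {Y X₀ : C} (f : Y ⟶ X₀) : Prop :=
  P X₀ ∧ ∀ (W : C), P W → ∀ g : Y ⟶ W, ∃ g' : X₀ ⟶ W, f ≫ g' = g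

/-- The map `f : X₀ ⟶ Y` is right minimal. -/
def IsRightMinimal {X₀ Y : C} (f : X₀ ⟶ Y) : Prop :=
  ∀ g : X₀ ⟶ X₀, g ≫ f = f → IsIso g

/-- The functor `H = Hom_C(T, -) : C ⥤ Mod End_C(T)ᵒᵖ`.  Here, with Mathlib's
conventions, the endomorphism ring `End (Opposite.op T)` of `T` viewed in `Cᵒᵖ` plays
the role of `End_C(T)ᵒᵖ`, so that each `Hom_C(T, X)` is a left module over it. -/
instance moduleEndOpLeft {X : C} {Y : C} : Module (End (Opposite.op X)) (X ⟶ Y) where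
  smul := fun r f => r.unop ≫ f
  smul_zero := fun _ => Limits.comp_zero
  zero_smul := fun _ => Limits.zero_comp
  one_smul := Category.id_comp
  mul_smul := fun _ _ _ => Category.assoc _ _ _
  smul_add := fun _ _ _ => Preadditive.comp_add _ _ _ _ _ _
  add_smul := fun _ _ _ => Preadditive.add_comp _ _ _ _ _ _

abbrev homFunctor (T : C) : C ⥤ ModuleCat.{v} (End (Opposite.op T)) where
  obj Y := ModuleCat.of _ (T ⟶ Y)
  map f := ModuleCat.ofHom
    { toFun := fun g => g ≫ f
      map_add' := fun _ _ => Preadditive.add_comp _ _ _ _ _ _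
      map_smul' := fun _ _ => Category.assoc _ _ _ }

/-- The predicate on `End_C(T)ᵒᵖ`-modules of being finite-dimensional (equivalently,
since `End_C(T)` is a finite-dimensional algebra, finitely generated). -/
abbrev isFinDim (T : C) : ModuleCat.{v} (End (Opposite.op T)) → Prop :=
  fun M => Module.Finite (End (Opposite.op T)) M

/-- The category `mod End_C(T)ᵒᵖ` of finite-dimensional `End_C(T)ᵒᵖ`-modules. -/
abbrev fdMod (T : C) := ObjectProperty.FullSubcategory (isFinDim T)

/-- The ideal relation on `C(T)` of maps factoring through an object of `ΣT^⊥`. -/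
def homRelCT (T : C) : HomRel (ObjectProperty.FullSubcategory (memCT T)) :=
  fun A B f g => FactorsThru (memSigmaTperp T) ((f.hom - g.hom : A.obj ⟶ B.obj))

/-- The ideal relation on `C(T)` of maps factoring through an object of `add ΣT`. -/
def homRelCTadd (T : C) : HomRel (ObjectProperty.FullSubcategory (memCT T)) :=
  fun A B f g => FactorsThru (memAdd ((shiftFunctor C (1 : ℤ)).obj T)) ((f.hom - g.hom : A.obj ⟶ B.obj))

/-- The ideal relation on `C` of maps factoring through an object of `add ΣT`. -/
def homRelAdd (T : C) : HomRel C :=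
  fun A B f g => FactorsThru (memAdd ((shiftFunctor C (1 : ℤ)).obj T)) (f - g)

end PaperBM

namespace PaperBM

set_option linter.unusedSectionVars false
set_option linter.unusedVariables false

section AuxLemmas

variable {C : Type u} [Category.{v} C] [Preadditive C] [HasZeroObject C]
  [HasShift C ℤ] [∀ n : ℤ, (shiftFunctor C n).Additive] [Pretriangulated C]
  [HasFiniteBiproducts C]

lemma memAdd_self (T : C) : memAdd T T := by
  refine ⟨1, biproduct.lift (fun _ => 𝟙 T), biproduct.desc (fun _ => 𝟙 T), ?_⟩
  rw [biproduct.lift_desc]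
  simp

lemma memAdd_biproduct (T : C) (n : ℕ) : memAdd T (⨁ fun _ : Fin n => T) :=
  ⟨n, 𝟙 _, 𝟙 _, Category.id_comp _⟩

lemma memAdd_shift {T X : C} (h : memAdd T X) :
    memAdd ((shiftFunctor C (1 : ℤ)).obj T) ((shiftFunctor C (1 : ℤ)).obj X) := by
  obtain ⟨n, s, r, hsr⟩ := h
  refine ⟨n, biproduct.lift (fun i => (shiftFunctor C (1 : ℤ)).map
      (s ≫ biproduct.π (fun _ : Fin n => T) i)),
    biproduct.desc (fun i => (shiftFunctor C (1 : ℤ)).map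
      (biproduct.ι (fun _ : Fin n => T) i ≫ r)), ?_⟩
  rw [biproduct.lift_desc]
  calc (∑ i : Fin n, (shiftFunctor C (1 : ℤ)).map (s ≫ biproduct.π (fun _ : Fin n => T) i) ≫
          (shiftFunctor C (1 : ℤ)).map (biproduct.ι (fun _ : Fin n => T) i ≫ r))
      = (shiftFunctor C (1 : ℤ)).map
          (∑ i : Fin n, s ≫ (biproduct.π (fun _ : Fin n => T) i ≫
            biproduct.ι (fun _ : Fin n => T) i) ≫ r) := by
        rw [Functor.map_sum]
        refine Finset.sum_congr rfl fun i _ => ?_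
        rw [← Functor.map_comp]
        congr 1
        simp
    _ = 𝟙 _ := by
        rw [← Preadditive.comp_sum, ← Preadditive.sum_comp, biproduct.total,
          Category.id_comp, hsr, CategoryTheory.Functor.map_id]

lemma hom_from_T_zero {T : C} (hT : IsRigidObj T) {Z : C}
    (hZ : memAdd ((shiftFunctor C (1 : ℤ)).obj T) Z) (g : T ⟶ Z) : g = 0 := by
  obtain ⟨n, s, r, hsr⟩ := hZ
  have h1 : g ≫ s = 0 := by
    apply biproduct.hom_ext
    intro i
    rw [Category.assoc, zero_comp]
    exact hT _
  calc g = (g ≫ s) ≫ r := by rw [Category.assoc, hsr, Category.comp_id]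
    _ = 0 := by rw [h1, zero_comp]

lemma hom_add_zero {T : C} (hT : IsRigidObj T) {X Z : C} (hX : memAdd T X)
    (hZ : memAdd ((shiftFunctor C (1 : ℤ)).obj T) Z) (f : X ⟶ Z) : f = 0 := by
  obtain ⟨n, s, r, hsr⟩ := hX
  have h1 : r ≫ f = 0 := by
    apply biproduct.hom_ext'
    intro i
    rw [comp_zero]
    exact hom_from_T_zero hT hZ _
  calc f = s ≫ (r ≫ f) := by rw [← Category.assoc, hsr, Category.id_comp]
    _ = 0 := by rw [h1, comp_zero]


section Approx

variable (k : Type*) [Field k] [CategoryTheory.Linear k C]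
  [∀ X Y : C, FiniteDimensional k (X ⟶ Y)]

include k

lemma exists_approx (T X : C) :
    ∃ (n : ℕ) (f : (⨁ fun _ : Fin n => T) ⟶ X),
      ∀ g : T ⟶ X, ∃ s : T ⟶ ⨁ (fun _ : Fin n => T), s ≫ f = g := by
  let b := Module.finBasis k (T ⟶ X)
  refine ⟨Module.finrank k (T ⟶ X), biproduct.desc (fun i => b i), fun g => ?_⟩
  refine ⟨biproduct.lift (fun i => b.repr g i • 𝟙 T), ?_⟩
  rw [biproduct.lift_desc]
  simp only [Linear.smul_comp, Category.id_comp]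
  exact b.sum_repr g

lemma memCT_all {T : C} (hT : IsRigidObj T)
    (hct : ∀ X : C, (∀ f : T ⟶ (shiftFunctor C (1 : ℤ)).obj X, f = 0) → memAdd T X)
    (X : C) : memCT T X := by
  obtain ⟨n, f, hf⟩ := exists_approx k T X
  obtain ⟨A, a, h, mem⟩ := distinguished_cocone_triangle₁ f
  have hA : memAdd T A := by
    apply hct
    intro φ
    have hzero : φ ≫ (shiftFunctor C (1 : ℤ)).map a = 0 :=
      hom_add_zero hT (memAdd_self T) (memAdd_shift (memAdd_biproduct T n)) _
    obtain ⟨y, hy⟩ := Triangle.coyoneda_exact₁ _ mem φ hzero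
    obtain ⟨s, hs⟩ := hf y
    rw [hy, ← hs]
    have hfh : f ≫ h = 0 := comp_distTriang_mor_zero₂₃ _ mem
    dsimp only [Triangle.mk]
    rw [Category.assoc, hfh, comp_zero]
  exact ⟨A, _, a, f, h, hA, memAdd_biproduct T n, mem⟩


end Approx

open Opposite

/-- Make the `End (op T)`-module structure on Hom-spaces available to instance search. -/
instance instModEnd {T X : C} : Module (End (Opposite.op T)) (unop (Opposite.op T) ⟶ X) :=
  moduleEndOpLeft

/-- A endomorphism of `T`, viewed as an element of `End (op T)`. -/
def eop {T : C} (r : T ⟶ T) : End (Opposite.op T) := Quiver.Hom.op r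

lemma eop_smul_eq {T X : C} (r : T ⟶ T) (f : unop (Opposite.op T) ⟶ X) :
    eop r • f = r ≫ f := rfl

lemma eop_comp_mul {T : C} (a b : T ⟶ T) : eop (a ≫ b) = eop a * eop b := rfl

lemma eop_ksmul {k : Type*} [Field k] [CategoryTheory.Linear k C] {T X : C} (c : k)
    (f : unop (Opposite.op T) ⟶ X) : eop (c • 𝟙 T) • f = c • f := by
  rw [eop_smul_eq]
  exact (Linear.smul_comp _ _ _ _ _ _).trans (by rw [Category.id_comp])

def toHomMap {T : C} {M : Type*} [AddCommGroup M] [Module (End (Opposite.op T)) M]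
    (n : ℕ) (m : Fin n → M) :
    (unop (Opposite.op T) ⟶ ⨁ fun _ : Fin n => T) →ₗ[End (Opposite.op T)] M where
  toFun f := ∑ i, eop (f ≫ biproduct.π (fun _ : Fin n => T) i) • m i
  map_add' x y := by
    have : ∀ i, eop ((x + y) ≫ biproduct.π (fun _ : Fin n => T) i)
        = eop (x ≫ biproduct.π (fun _ : Fin n => T) i)
          + eop (y ≫ biproduct.π (fun _ : Fin n => T) i) := by
      intro i
      show Quiver.Hom.op _ = _
      rw [Preadditive.add_comp, op_add]
      rfl
    simp only [this, add_smul, Finset.sum_add_distrib]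
  map_smul' r f := by
    simp only [RingHom.id_apply]
    rw [Finset.smul_sum]
    refine Finset.sum_congr rfl fun i _ => ?_
    have h1 : (r • f) ≫ biproduct.π (fun _ : Fin n => T) i
        = r.unop ≫ (f ≫ biproduct.π (fun _ : Fin n => T) i) := by
      rw [← Category.assoc]; rfl
    have h2 : eop (r.unop ≫ (f ≫ biproduct.π (fun _ : Fin n => T) i))
        = r * eop (f ≫ biproduct.π (fun _ : Fin n => T) i) := by
      rw [eop_comp_mul]
      congr 1
    rw [h1, h2, mul_smul]

lemma toHomMap_lift {T : C} {M : Type*} [AddCommGroup M] [Module (End (Opposite.op T)) M]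
    (n : ℕ) (m : Fin n → M) (g : Fin n → (T ⟶ T)) :
    toHomMap n m (biproduct.lift g) = ∑ i, eop (g i) • m i := by
  show (∑ i, eop (biproduct.lift g ≫ biproduct.π (fun _ : Fin n => T) i) • m i) = _
  refine Finset.sum_congr rfl fun i _ => ?_
  rw [biproduct.lift_π]

lemma finite_H (k : Type*) [Field k] [CategoryTheory.Linear k C]
    [∀ X Y : C, FiniteDimensional k (X ⟶ Y)] (T X : C) :
    Module.Finite (End (Opposite.op T)) (unop (Opposite.op T) ⟶ X) := by
  classical
  let b := Module.finBasis k (unop (Opposite.op T) ⟶ X)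
  refine ⟨⟨Finset.univ.image b, ?_⟩⟩
  rw [eq_top_iff]
  intro x _
  have hx := b.sum_repr x
  rw [← hx]
  refine Submodule.sum_mem _ fun i _ => ?_
  rw [← eop_ksmul]
  exact Submodule.smul_mem _ _ (Submodule.subset_span (by simp))

lemma exists_hom_of_linear {T W Y : C} (hW : memAdd T W)
    (φ : (unop (Opposite.op T) ⟶ W) →ₗ[End (Opposite.op T)] (unop (Opposite.op T) ⟶ Y)) :
    ∃ β : W ⟶ Y, ∀ t : T ⟶ W, φ t = t ≫ β := by
  obtain ⟨n, s, r, hsr⟩ := hW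
  have hsm : ∀ (a : T ⟶ T) (x : T ⟶ W), φ (a ≫ x) = a ≫ φ x := fun a x => by
    rw [← eop_smul_eq a x, map_smul, eop_smul_eq]
  set F := fun _ : Fin n => T with hF
  refine ⟨s ≫ biproduct.desc (fun i => φ (biproduct.ι F i ≫ r)), fun t => ?_⟩
  have ht : t = ∑ i, (t ≫ s ≫ biproduct.π F i) ≫ (biproduct.ι F i ≫ r) := by
    have h2 : (∑ i, (t ≫ s ≫ biproduct.π F i) ≫ (biproduct.ι F i ≫ r))
        = (t ≫ s) ≫ (∑ i, biproduct.π F i ≫ biproduct.ι F i) ≫ r := by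
      rw [Preadditive.sum_comp, Preadditive.comp_sum]
      refine Finset.sum_congr rfl fun i _ => ?_
      simp [Category.assoc]
    rw [h2, biproduct.total, Category.id_comp, Category.assoc, hsr, Category.comp_id]
  have hrhs : t ≫ s ≫ biproduct.desc (fun i => φ (biproduct.ι F i ≫ r))
      = ∑ i, (t ≫ s ≫ biproduct.π F i) ≫ φ (biproduct.ι F i ≫ r) := by
    have h3 : t ≫ s = ∑ i, (t ≫ s ≫ biproduct.π F i) ≫ biproduct.ι F i := by
      have h4 := biproduct.total (f := F)
      calc t ≫ s = (t ≫ s) ≫ (∑ i, biproduct.π F i ≫ biproduct.ι F i) := by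
            rw [h4, Category.comp_id]
        _ = ∑ i, (t ≫ s ≫ biproduct.π F i) ≫ biproduct.ι F i := by
            rw [Preadditive.comp_sum]
            refine Finset.sum_congr rfl fun i _ => ?_
            simp [Category.assoc]
    rw [← Category.assoc, h3, Preadditive.sum_comp]
    refine Finset.sum_congr rfl fun i _ => ?_
    rw [Category.assoc, biproduct.ι_desc]
  rw [hrhs]
  conv_lhs => rw [ht]
  rw [map_sum]
  refine Finset.sum_congr rfl fun i _ => ?_
  rw [hsm]


lemma factors_of_H_zero {T X Y : C} (hT : IsRigidObj T) (hX : memCT T X) {f : X ⟶ Y}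
    (hf : ∀ t : T ⟶ X, t ≫ f = 0) :
    FactorsThru (memAdd ((shiftFunctor C (1 : ℤ)).obj T)) f := by
  obtain ⟨T₁, T₀, a, b, c, h₁, h₀, mem⟩ := hX
  have hb : b ≫ f = 0 := by
    obtain ⟨n, s, r, hsr⟩ := h₀
    have h1 : r ≫ (b ≫ f) = 0 := by
      apply biproduct.hom_ext'
      intro i
      rw [comp_zero]
      simpa only [Category.assoc] using hf (biproduct.ι (fun _ : Fin n => T) i ≫ r ≫ b)
    calc b ≫ f = s ≫ (r ≫ (b ≫ f)) := by rw [← Category.assoc, hsr, Category.id_comp]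
      _ = 0 := by rw [h1, comp_zero]
  obtain ⟨g, hg⟩ := Triangle.yoneda_exact₃ _ mem f hb
  exact ⟨_, c, g, memAdd_shift h₁, hg.symm⟩

lemma H_zero_of_factors {T A B : C} (hT : IsRigidObj T) {f : A ⟶ B}
    (hf : FactorsThru (memAdd ((shiftFunctor C (1 : ℤ)).obj T)) f) (t : T ⟶ A) : t ≫ f = 0 := by
  obtain ⟨Z, g, h, hZ, hgh⟩ := hf
  rw [← hgh, ← Category.assoc, hom_from_T_zero hT hZ (t ≫ g), zero_comp]

lemma H_full {T X Y : C} (hT : IsRigidObj T) (hX : memCT T X)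
    (φ : (unop (Opposite.op T) ⟶ X) →ₗ[End (Opposite.op T)] (unop (Opposite.op T) ⟶ Y)) :
    ∃ f : X ⟶ Y, ∀ t : T ⟶ X, φ t = t ≫ f := by
  obtain ⟨T₁, T₀, a, b, c, h₁, h₀, mem⟩ := hX
  let ψ : (unop (Opposite.op T) ⟶ T₀) →ₗ[End (Opposite.op T)] (unop (Opposite.op T) ⟶ Y) :=
  { toFun := fun t => φ (t ≫ b)
    map_add' := fun x y => by show φ ((x + y) ≫ b) = φ (x ≫ b) + φ (y ≫ b); rw [Preadditive.add_comp, map_add]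
    map_smul' := fun r x => by
      show φ ((r • x) ≫ b) = r • φ (x ≫ b)
      have h5 : (r • x) ≫ b = r • (x ≫ b) := Category.assoc _ _ _
      rw [h5, map_smul] }
  obtain ⟨β, hβ⟩ := exists_hom_of_linear h₀ ψ
  have hab0 : a ≫ b = 0 := comp_distTriang_mor_zero₁₂ _ mem
  have hab : a ≫ β = 0 := by
    obtain ⟨n, s₁, r₁, hsr₁⟩ := h₁
    have h1 : r₁ ≫ (a ≫ β) = 0 := by
      apply biproduct.hom_ext'
      intro i
      rw [comp_zero]
      have h2 := hβ (biproduct.ι (fun _ : Fin n => T) i ≫ r₁ ≫ a)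
      have h3 : (biproduct.ι (fun _ : Fin n => T) i ≫ r₁ ≫ a) ≫ b = 0 := by
        simp only [Category.assoc, hab0, comp_zero]
      have h4 : ψ (biproduct.ι (fun _ : Fin n => T) i ≫ r₁ ≫ a) = 0 := by
        show φ _ = 0
        rw [h3, map_zero]
      have h5 : (biproduct.ι (fun _ : Fin n => T) i ≫ r₁ ≫ a) ≫ β = 0 := by
        rw [← h2]; exact h4
      simpa only [Category.assoc] using h5
    calc a ≫ β = s₁ ≫ (r₁ ≫ (a ≫ β)) := by rw [← Category.assoc, hsr₁, Category.id_comp]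
      _ = 0 := by rw [h1, comp_zero]
  obtain ⟨f, hfβ⟩ := Triangle.yoneda_exact₂ _ mem β hab
  refine ⟨f, fun t => ?_⟩
  have htc : t ≫ c = 0 := hom_from_T_zero hT (memAdd_shift h₁) _
  obtain ⟨y, hy⟩ := Triangle.coyoneda_exact₃ _ mem t htc
  rw [hy]
  dsimp only [Triangle.mk] at hfβ ⊢
  exact (hβ y).trans (by rw [hfβ]; exact (Category.assoc _ _ _).symm)


lemma toHomMap_apply {T : C} {M : Type*} [AddCommGroup M] [Module (End (Opposite.op T)) M]
    (n : ℕ) (m : Fin n → M) (f : unop (Opposite.op T) ⟶ ⨁ fun _ : Fin n => T) :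
    toHomMap n m f = ∑ i, eop (f ≫ biproduct.π (fun _ : Fin n => T) i) • m i := rfl

lemma eop_id : {T : C} → eop (𝟙 T) = 1 := rfl

lemma eop_zero {T : C} : eop (0 : T ⟶ T) = 0 := rfl

lemma H_ess_surj {k : Type*} [Field k] [CategoryTheory.Linear k C]
    [∀ X Y : C, FiniteDimensional k (X ⟶ Y)]
    {T : C} (hT : IsRigidObj T)
    (M : Type v) [AddCommGroup M] [Module (End (Opposite.op T)) M]
    [Module.Finite (End (Opposite.op T)) M] :
    ∃ X : C, Nonempty ((unop (Opposite.op T) ⟶ X) ≃ₗ[End (Opposite.op T)] M) := by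
  classical
  obtain ⟨n, mgen, hspan⟩ := Module.Finite.exists_fin (R := End (Opposite.op T)) (M := M)
  set p := toHomMap (T := T) n mgen with hp
  have hpsurj : Function.Surjective p := by
    rw [← LinearMap.range_eq_top, eq_top_iff, ← hspan, Submodule.span_le]
    rintro x ⟨i, rfl⟩
    refine ⟨biproduct.lift (Pi.single i (𝟙 T)), ?_⟩
    rw [toHomMap_lift, Finset.sum_eq_single i]
    · rw [Pi.single_eq_same, eop_id, one_smul]
    · intro j _ hj
      rw [Pi.single_eq_of_ne hj, eop_zero]; exact zero_smul (End (Opposite.op T)) (mgen j)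
    · intro hmem
      exact absurd (Finset.mem_univ i) hmem
  set K := LinearMap.ker p with hK
  let K' : Submodule k (unop (Opposite.op T) ⟶ ⨁ fun _ : Fin n => T) :=
  { carrier := K
    add_mem' := fun hx hy => K.add_mem hx hy
    zero_mem' := K.zero_mem
    smul_mem' := fun c x hx => by
      show c • x ∈ K
      rw [← eop_ksmul]
      exact K.smul_mem _ hx }
  let bb := Module.finBasis k K'
  set ψ := toHomMap (T := T) _ (fun i => (bb i).1) with hψ
  have hψrange : LinearMap.range ψ = K := by
    apply le_antisymm
    · rintro _ ⟨f, rfl⟩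
      rw [hψ, toHomMap_apply]
      exact Submodule.sum_mem _ fun i _ => Submodule.smul_mem _ _ (bb i).2
    · intro x hx
      have hx' : (⟨x, hx⟩ : K') = ∑ i, bb.repr ⟨x, hx⟩ i • bb i := (bb.sum_repr _).symm
      have hx2 : x = ∑ i, bb.repr ⟨x, hx⟩ i • ((bb i : K') : (unop (Opposite.op T) ⟶ ⨁ fun _ : Fin n => T)) := by
        have h6 := congrArg (Subtype.val) hx'
        simpa only [Submodule.coe_sum, Submodule.coe_smul] using h6
      refine ⟨biproduct.lift (fun i => bb.repr ⟨x, hx⟩ i • 𝟙 T), ?_⟩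
      rw [toHomMap_lift]
      refine (Finset.sum_congr rfl fun i _ => ?_).trans hx2.symm
      rw [eop_ksmul]
  obtain ⟨α, hα⟩ := exists_hom_of_linear (memAdd_biproduct T _) ψ
  obtain ⟨X, bmor, cmor, mem⟩ := distinguished_cocone_triangle α
  let q : (unop (Opposite.op T) ⟶ ⨁ fun _ : Fin n => T) →ₗ[End (Opposite.op T)]
      (unop (Opposite.op T) ⟶ X) :=
  { toFun := fun t => t ≫ bmor
    map_add' := fun x y => Preadditive.add_comp _ _ _ _ _ _
    map_smul' := fun r x => by
      show (r • x) ≫ bmor = r • (x ≫ bmor)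
      exact Category.assoc _ _ _ }
  have hqsurj : Function.Surjective q := by
    intro t
    have htc : t ≫ cmor = 0 :=
      hom_from_T_zero hT (memAdd_shift (memAdd_biproduct T _)) _
    obtain ⟨y, hy⟩ := Triangle.coyoneda_exact₃ _ mem t htc
    exact ⟨y, hy.symm⟩
  have hker : LinearMap.ker q = K := by
    apply le_antisymm
    · intro t ht
      have ht' : t ≫ bmor = 0 := ht
      obtain ⟨y, hy⟩ := Triangle.coyoneda_exact₂ _ mem t ht'
      rw [← hψrange]
      exact ⟨y, by rw [hα y]; exact hy.symm⟩
    · rw [← hψrange]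
      rintro _ ⟨y, rfl⟩
      show (ψ y) ≫ bmor = 0
      have hz : α ≫ bmor = 0 := comp_distTriang_mor_zero₁₂ _ mem
      rw [hα y, Category.assoc, hz, comp_zero]
  refine ⟨X, ⟨?_⟩⟩
  let e1 := LinearMap.quotKerEquivOfSurjective p hpsurj
  let e2 := LinearMap.quotKerEquivOfSurjective q hqsurj
  let e3 := Submodule.quotEquivOfEq _ _ (hker.trans hK.symm)
  exact e2.symm.trans (e3.trans e1)


end AuxLemmas

end PaperBM

open PaperBM

/-- If `T` is a cluster-tilting object then `C(T) = C`, and consequently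
`Hom_C(T, −)` induces an equivalence `C/add ΣT ≌ mod End_C(T)ᵒᵖ`. -/
theorem statement_18 {C : Type u} [Category.{v} C] [Preadditive C] [HasZeroObject C]
    [HasShift C ℤ] [∀ n : ℤ, (shiftFunctor C n).Additive] [Pretriangulated C]
    [HasFiniteBiproducts C]
    {k : Type*} [Field k] [CategoryTheory.Linear k C]
    [∀ X Y : C, FiniteDimensional k (X ⟶ Y)] [IsIdempotentComplete C]
    (T : C) (hT : IsRigidObj T)
    (hct : ∀ X : C, (∀ f : T ⟶ (shiftFunctor C (1 : ℤ)).obj X, f = 0) → memAdd T X) :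
    (∀ X : C, memCT T X) ∧
    ∃ E : CategoryTheory.Quotient (homRelAdd T) ⥤ fdMod T,
      E.IsEquivalence ∧
      CategoryTheory.Quotient.functor (homRelAdd T) ⋙ E ⋙
          ObjectProperty.ι (isFinDim T) = homFunctor T := by
  have hCT : ∀ X : C, memCT T X := fun X => memCT_all k hT hct X
  refine ⟨hCT, ?_⟩
  have hfin : ∀ X : C, isFinDim T ((homFunctor T).obj X) := fun X => finite_H k T X
  let F' : C ⥤ fdMod T := ObjectProperty.lift (isFinDim T) (homFunctor T) hfin
  have hrel : ∀ (x y : C) (f₁ f₂ : x ⟶ y), homRelAdd T f₁ f₂ → F'.map f₁ = F'.map f₂ := by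
    intro x y f₁ f₂ hr
    have hz : ∀ t : T ⟶ x, t ≫ f₁ = t ≫ f₂ := by
      intro t
      have h0 := H_zero_of_factors hT hr t
      rw [Preadditive.comp_sub] at h0
      exact sub_eq_zero.mp h0
    apply ObjectProperty.hom_ext
    apply ModuleCat.hom_ext
    exact LinearMap.ext hz
  let E : CategoryTheory.Quotient (homRelAdd T) ⥤ fdMod T :=
    CategoryTheory.Quotient.lift _ F' hrel
  have hfaith : E.Faithful := by
    constructor
    intro Q1 Q2 f g hfg
    obtain ⟨f₀, rfl⟩ := (CategoryTheory.Quotient.functor (homRelAdd T)).map_surjective f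
    obtain ⟨g₀, rfl⟩ := (CategoryTheory.Quotient.functor (homRelAdd T)).map_surjective g
    have hfg' : ((homFunctor T).map f₀ : (homFunctor T).obj Q1.as ⟶ (homFunctor T).obj Q2.as)
        = (homFunctor T).map g₀ := congrArg (fun φ => φ.hom) hfg
    have h1 : ∀ t : T ⟶ Q1.as, t ≫ f₀ = t ≫ g₀ := fun t =>
      LinearMap.congr_fun (congrArg ModuleCat.Hom.hom hfg') t
    have h2 : ∀ t : T ⟶ Q1.as, t ≫ (f₀ - g₀) = 0 := by
      intro t
      rw [Preadditive.comp_sub, h1 t, sub_self]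
    exact CategoryTheory.Quotient.sound _ (factors_of_H_zero hT (hCT _) h2)
  have hfull : E.Full := by
    constructor
    intro Q1 Q2 φ
    obtain ⟨f, hf⟩ := H_full hT (hCT Q1.as) φ.hom.hom
    refine ⟨(CategoryTheory.Quotient.functor (homRelAdd T)).map f, ?_⟩
    apply ObjectProperty.hom_ext
    apply ModuleCat.hom_ext
    exact LinearMap.ext fun t => (hf t).symm
  have hess : E.EssSurj := by
    constructor
    intro Y
    haveI : Module.Finite (End (Opposite.op T)) Y.obj := Y.property
    obtain ⟨X, ⟨e⟩⟩ := H_ess_surj (k := k) hT Y.obj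
    refine ⟨(CategoryTheory.Quotient.functor (homRelAdd T)).obj X, ⟨?_⟩⟩
    exact ObjectProperty.isoMk (P := isFinDim T)
      { hom := ModuleCat.ofHom e.toLinearMap
        inv := ModuleCat.ofHom e.symm.toLinearMap
        hom_inv_id := ModuleCat.hom_ext (LinearMap.ext fun x => e.symm_apply_apply x)
        inv_hom_id := ModuleCat.hom_ext (LinearMap.ext fun x => e.apply_symm_apply x) }
  refine ⟨E, ⟨hfaith, hfull, hess⟩, ?_⟩
  have h1 : CategoryTheory.Quotient.functor (homRelAdd T) ⋙ E = F' :=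
    CategoryTheory.Quotient.lift_spec _ _ _
  calc CategoryTheory.Quotient.functor (homRelAdd T) ⋙ E ⋙ ObjectProperty.ι (isFinDim T)
      = (CategoryTheory.Quotient.functor (homRelAdd T) ⋙ E) ⋙
          ObjectProperty.ι (isFinDim T) := rfl
    _ = F' ⋙ ObjectProperty.ι (isFinDim T) := by rw [h1]
    _ = homFunctor T := rfl
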